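/- Let n ≥ 1, m = 2n−1, and let y : [0,1] → ℂ be (2n−1) times continuously differentiable. Then 2·Im(∫₀¹ (−i)^{2n−1} y^{(2n−1)}(x)·conj(y(x)) dx) = q_K(ŷ₁) − q_K(ŷ₀). -/

import Mathlib

open Finset in
private lemma telescope (m : ℕ) (a b : ℕ → ℂ) :
    ∑ p ∈ Finset.range m, (-1:ℂ)^p * (a (p+1) * b (m-1-p) + a p * b (m-p))
      = a 0 * b m - (-1:ℂ)^m * (a m * b 0) := by
  have h1 : ∑ q ∈ Finset.range (m+1), (-1:ℂ)^q * a q * b (m - q)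
      = (∑ p ∈ Finset.range m, (-1:ℂ)^(p+1) * a (p+1) * b (m - (p+1))) + a 0 * b m := by
    rw [Finset.sum_range_succ']; simp
  have h2 : ∑ q ∈ Finset.range (m+1), (-1:ℂ)^q * a q * b (m - q)
      = (∑ p ∈ Finset.range m, (-1:ℂ)^p * a p * b (m - p)) + (-1:ℂ)^m * a m * b 0 := by
    rw [Finset.sum_range_succ, Nat.sub_self]
  have h3 : ∀ p ∈ Finset.range m, (-1:ℂ)^p * (a (p+1) * b (m-1-p) + a p * b (m-p))
      = -((-1:ℂ)^(p+1) * a (p+1) * b (m - (p+1))) + (-1:ℂ)^p * a p * b (m - p) := by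
    intro p hp
    have : m - (p+1) = m - 1 - p := by omega
    rw [this, pow_succ]; ring
  rw [Finset.sum_congr rfl h3, Finset.sum_add_distrib, Finset.sum_neg_distrib]
  have := h1.symm.trans h2
  linear_combination -this

/-- The quadratic form `q_K(u) = (−1)^n · Σ_{p=0}^{2n−2} (−1)^p u_p·conj(u_{2n−2−p})`
of the matrix `K` (here `Fin.rev p` has value `2n−2−p`). -/
noncomputable def qK (n : ℕ) (u : Fin (2 * n - 1) → ℂ) : ℂ :=
  (-1 : ℂ) ^ n *
    ∑ p : Fin (2 * n - 1), (-1 : ℂ) ^ (p : ℕ) * u p * (starRingEnd ℂ) (u p.rev)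

/-- for `m = 2n−1` and `y` (2n−1)-times continuously differentiable,
`2·Im(∫₀¹ (−i)^{2n−1} y^{(2n−1)}·conj(y)) = q_K(ŷ₁) − q_K(ŷ₀)`. -/
theorem stmt2 (n : ℕ) (hn : 1 ≤ n) (y : ℝ → ℂ) (hy : ContDiff ℝ (2 * n - 1) y) :
    (2 * (∫ x in (0:ℝ)..1,
        (-Complex.I) ^ (2 * n - 1) * iteratedDeriv (2 * n - 1) y x * (starRingEnd ℂ) (y x)).im : ℂ)
      = qK n (fun k => iteratedDeriv (k : ℕ) y 1)
        - qK n (fun k => iteratedDeriv (k : ℕ) y 0) := by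
  have hy' : ContDiff ℝ ((2 * n - 1 : ℕ) : WithTop ℕ∞) y := by
    have hcast : ((2*n-1:ℕ) : WithTop ℕ∞) = 2*(n:WithTop ℕ∞) - 1 := by
      rw [show ((2*n-1:ℕ) : WithTop ℕ∞) = (((2*n-1:ℕ):ℕ∞) : WithTop ℕ∞) from rfl]
      norm_cast
    rw [hcast]; exact hy
  clear hy
  set m : ℕ := 2 * n - 1 with hm
  have hm1 : 1 ≤ m := by omega
  set f : ℕ → ℝ → ℂ := fun p => iteratedDeriv p y with hf
  have hcont : ∀ p, p ≤ m → Continuous (f p) := fun p hp =>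
    hy'.continuous_iteratedDeriv p (by exact_mod_cast hp)
  have hder : ∀ p, p < m → ∀ x : ℝ, HasDerivAt (f p) (f (p+1) x) x := by
    intro p hp x
    have hd : Differentiable ℝ (f p) := hy'.differentiable_iteratedDeriv p (by exact_mod_cast hp)
    have : f (p+1) x = deriv (f p) x := by rw [hf]; simp [iteratedDeriv_succ]
    rw [this]
    exact (hd x).hasDerivAt
  have hycont : Continuous y := by simpa [hf, iteratedDeriv_zero] using hcont 0 (by omega)
  set F : ℝ → ℂ := fun x => ∑ p ∈ Finset.range m,
      (-1:ℂ)^p * (f p x * (starRingEnd ℂ) (f (m-1-p) x)) with hF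
  set G : ℝ → ℂ := fun x => f m x * (starRingEnd ℂ) (y x)
      + (starRingEnd ℂ) (f m x * (starRingEnd ℂ) (y x)) with hG
  -- derivative of F is G
  have hFderiv : ∀ x : ℝ, HasDerivAt F (G x) x := by
    intro x
    have key : ∀ p ∈ Finset.range m,
        HasDerivAt (fun x => (-1:ℂ)^p * (f p x * (starRingEnd ℂ) (f (m-1-p) x)))
          ((-1:ℂ)^p * (f (p+1) x * (starRingEnd ℂ) (f (m-1-p) x)
            + f p x * (starRingEnd ℂ) (f (m-p) x))) x := by
      intro p hp
      rw [Finset.mem_range] at hp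
      have h1 : HasDerivAt (f p) (f (p+1) x) x := hder p hp x
      have h2 : HasDerivAt (f (m-1-p)) (f (m-1-p+1) x) x := hder (m-1-p) (by omega) x
      have h2' : HasDerivAt (fun x => (starRingEnd ℂ) (f (m-1-p) x))
          ((starRingEnd ℂ) (f (m-p) x)) x := by
        have := h2.star
        simpa [Complex.star_def, show m - 1 - p + 1 = m - p by omega] using this
      exact ((h1.mul h2')).const_mul _
    have hsum := HasDerivAt.fun_sum key
    have heq : (∑ p ∈ Finset.range m, (-1:ℂ)^p * (f (p+1) x * (starRingEnd ℂ) (f (m-1-p) x)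
        + f p x * (starRingEnd ℂ) (f (m-p) x))) = G x := by
      rw [telescope m (fun p => f p x) (fun q => (starRingEnd ℂ) (f q x))]
      have hodd : (-1:ℂ)^m = -1 := Odd.neg_one_pow ⟨n-1, by omega⟩
      rw [hodd, hG]
      have h0 : f 0 x = y x := by rw [hf]; simp
      rw [h0]
      simp only [map_mul, Complex.conj_conj]
      ring
    rw [heq] at hsum
    exact hsum
  have hc1 : Continuous fun x => f m x * (starRingEnd ℂ) (y x) :=
    (hcont m le_rfl).mul (Complex.continuous_conj.comp hycont)
  have hGcont : Continuous G := by
    rw [hG]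
    exact hc1.add (Complex.continuous_conj.comp hc1)
  have hFTC : (∫ x in (0:ℝ)..1, G x) = F 1 - F 0 :=
    intervalIntegral.integral_eq_sub_of_hasDerivAt (fun x _ => hFderiv x)
      (hGcont.intervalIntegrable 0 1)
  set w : ℂ := ∫ x in (0:ℝ)..1, f m x * (starRingEnd ℂ) (y x) with hw
  have hc2 : Continuous fun x => (starRingEnd ℂ) (f m x * (starRingEnd ℂ) (y x)) :=
    Complex.continuous_conj.comp hc1
  have hGsplit : (∫ x in (0:ℝ)..1, G x) = w + (starRingEnd ℂ) w := by
    simp only [hG]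
    rw [intervalIntegral.integral_add (hc1.intervalIntegrable 0 1)
      (hc2.intervalIntegrable 0 1)]
    congr 1
    rw [hw, intervalIntegral.integral_of_le (by norm_num : (0:ℝ) ≤ 1),
      intervalIntegral.integral_of_le (by norm_num : (0:ℝ) ≤ 1)]
    exact integral_conj
  have hFsub : F 1 - F 0 = ((2 * w.re : ℝ) : ℂ) := by
    rw [← hFTC, hGsplit, Complex.add_conj]
  -- qK equals (-1)^n * F
  have hqK : ∀ t : ℝ, qK n (fun k => iteratedDeriv (k : ℕ) y t) = (-1:ℂ)^n * F t := by
    intro t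
    rw [qK]
    simp only [hF]
    congr 1
    calc ∑ p : Fin (2*n-1), (-1:ℂ)^(p:ℕ) * iteratedDeriv (p:ℕ) y t
            * (starRingEnd ℂ) (iteratedDeriv ((p.rev : Fin (2*n-1)) : ℕ) y t)
        = ∑ p : Fin m, (fun j : ℕ => (-1:ℂ)^j * f j t
            * (starRingEnd ℂ) (f (m-1-j) t)) (p : ℕ) := by
          apply Finset.sum_congr rfl
          intro p _
          have hrev : ((p.rev : Fin m) : ℕ) = m - 1 - (p : ℕ) := by
            rw [Fin.val_rev]; omega
          rw [hrev, hf]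
      _ = ∑ p ∈ Finset.range m, (-1:ℂ)^p * f p t * (starRingEnd ℂ) (f (m-1-p) t) :=
          by exact Fin.sum_univ_eq_sum_range (fun j => (-1:ℂ)^j * f j t * (starRingEnd ℂ) (f (m-1-j) t)) m
      _ = ∑ p ∈ Finset.range m, (-1:ℂ)^p * (f p t * (starRingEnd ℂ) (f (m-1-p) t)) := by
          apply Finset.sum_congr rfl; intro p _; ring
  -- LHS computation
  have hpow : (-Complex.I) ^ m = (-1:ℂ)^n * Complex.I := by
    obtain ⟨k, rfl⟩ : ∃ k, n = k + 1 := ⟨n - 1, by omega⟩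
    have hmk : m = 2 * k + 1 := by omega
    rw [hmk, pow_succ, pow_mul]
    have hsq : (-Complex.I)^2 = -1 := by
      rw [neg_pow, Complex.I_sq]; norm_num
    rw [hsq, pow_succ]
    ring
  have hLHS : (∫ x in (0:ℝ)..1,
      (-Complex.I) ^ m * f m x * (starRingEnd ℂ) (y x))
      = (-1:ℂ)^n * Complex.I * w := by
    rw [hw, ← intervalIntegral.integral_const_mul]
    congr 1 with x
    rw [hpow]
    ring
  rw [hLHS, hqK, hqK, ← mul_sub, hFsub]
  have h : (((-1:ℝ)^n : ℝ) : ℂ) = (-1:ℂ)^n := by push_cast; ring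
  have h1 : ((-1:ℂ)^n).im = 0 := by rw [← h]; exact Complex.ofReal_im _
  have h2 : ((-1:ℂ)^n).re = (-1:ℝ)^n := by rw [← h]; exact Complex.ofReal_re _
  have him : ((-1:ℂ)^n * Complex.I * w).im = (-1:ℝ)^n * w.re := by
    simp only [Complex.mul_im, Complex.mul_re, h1, h2, Complex.I_re, Complex.I_im]
    ring
  rw [him, ← h]
  push_cast
  ring
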